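/- In the regret game, if v > (1/p)·(1 + κ·(1−p)), then for every player i and every action profile a, the expected payoff from choosing risky strictly exceeds the expected payoff from choosing safe (i.e., risky is a strictly dominant action); consequently, the profile in which every player chooses risky is a pure strategy Nash equilibrium and it is the unique pure strategy Nash equilibrium. -/
import Mathlib


namespace RegretGame

/-- An action in the regret game: choose the risky lottery or the safe lottery. -/
inductive Act : Type
  | risky : Act
  | safe : Act
deriving DecidableEq, Repr

/-- `numRisky a i` is the number of players other than `i` choosing the risky lottery
at the action profile `a`. -/
def numRisky {N : ℕ} (a : Fin N → Act) (i : Fin N) : ℕ :=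
  (Finset.univ.filter (fun j => j ≠ i ∧ a j = Act.risky)).card

/-- Player `i`'s expected payoff in the regret game at action profile `a`, given the
success probability `p`, coefficient of regret aversion `κ`, normalized good-state
payoff `v` of the risky lottery, and the information function `q` (the probability of
learning the risky outcome, as a function of how many of the others chose risky). -/
noncomputable def payoff {N : ℕ} (p κ v : ℝ) (q : ℕ → ℝ)
    (a : Fin N → Act) (i : Fin N) : ℝ :=
  if a i = Act.risky then p * v - (1 - p) * κ
  else 1 - p * q (numRisky a i) * κ * (v - 1)

/-- A pure strategy Nash equilibrium of the regret game: no player can strictly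
increase her expected payoff by unilaterally changing her own action. -/
def IsNash {N : ℕ} (p κ v : ℝ) (q : ℕ → ℝ) (a : Fin N → Act) : Prop :=
  ∀ (i : Fin N) (b : Act),
    payoff p κ v q (Function.update a i b) i ≤ payoff p κ v q a i

lemma numRisky_le {N : ℕ} (a : Fin N → Act) (i : Fin N) : numRisky a i ≤ N - 1 := by
  unfold numRisky
  calc (Finset.univ.filter (fun j => j ≠ i ∧ a j = Act.risky)).card
      ≤ (Finset.univ.erase i).card := by
        apply Finset.card_le_card
        intro j hj
        simp only [Finset.mem_filter, Finset.mem_univ, true_and] at hj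
        simp [hj.1]
    _ = N - 1 := by
        rw [Finset.card_erase_of_mem (Finset.mem_univ i)]
        simp

/-- **Theorem 3, part 2.** If `v > (1/p)·(1 + κ·(1−p))`, then risky is a strictly
dominant action for every player, the all-risky profile is a pure strategy Nash
equilibrium, and it is the unique pure strategy Nash equilibrium of the regret game. -/
theorem regret_game_risky_dominant
    (N : ℕ) (hN : 2 ≤ N) (p κ v : ℝ)
    (hp : 0 < p ∧ p < 1) (hκ : 0 < κ) (hv : 1 < v)
    (q : ℕ → ℝ)
    (hq01 : ∀ m ≤ N - 1, 0 ≤ q m ∧ q m ≤ 1)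
    (hq0 : q 0 = 0) (hqN : q (N - 1) = 1)
    (hqmono : ∀ m₁ m₂, m₁ < m₂ → m₂ ≤ N - 1 → q m₁ < q m₂)
    (hdom : v > (1 / p) * (1 + κ * (1 - p))) :
    (∀ (a : Fin N → Act) (i : Fin N),
        payoff p κ v q (Function.update a i Act.safe) i <
          payoff p κ v q (Function.update a i Act.risky) i) ∧
    IsNash p κ v q (fun _ : Fin N => Act.risky) ∧
    (∀ a : Fin N → Act, IsNash p κ v q a → a = fun _ : Fin N => Act.risky) := by
  obtain ⟨hp0, hp1⟩ := hp
  have hdom' : 1 + κ * (1 - p) < v * p := by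
    rw [gt_iff_lt, one_div, inv_mul_eq_div] at hdom
    exact (div_lt_iff₀ hp0).mp hdom
  have hrisky : (1:ℝ) < p * v - (1 - p) * κ := by nlinarith
  have hsafe : ∀ (a : Fin N → Act) (i : Fin N), a i = Act.safe →
      payoff p κ v q a i ≤ 1 := by
    intro a i hi
    have hm := numRisky_le a i
    have hq := (hq01 _ hm).1
    simp only [payoff, hi]
    have : 0 ≤ p * q (numRisky a i) * κ * (v - 1) :=
      mul_nonneg (mul_nonneg (mul_nonneg hp0.le hq) hκ.le) (by linarith)
    simp
    linarith
  have hdomi : ∀ (a : Fin N → Act) (i : Fin N),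
      payoff p κ v q (Function.update a i Act.safe) i <
        payoff p κ v q (Function.update a i Act.risky) i := by
    intro a i
    have h1 : payoff p κ v q (Function.update a i Act.safe) i ≤ 1 :=
      hsafe _ i (by simp)
    have h2 : payoff p κ v q (Function.update a i Act.risky) i = p * v - (1 - p) * κ := by
      simp [payoff]
    linarith
  refine ⟨hdomi, ?_, ?_⟩
  · intro i b
    have hpay : payoff p κ v q (fun _ : Fin N => Act.risky) i = p * v - (1 - p) * κ := by
      simp [payoff]
    cases b with
    | risky =>
        have : payoff p κ v q (Function.update (fun _ : Fin N => Act.risky) i Act.risky) i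
            = p * v - (1 - p) * κ := by simp [payoff]
        rw [this, hpay]
    | safe =>
        have h1 := hsafe (Function.update (fun _ : Fin N => Act.risky) i Act.safe) i (by simp)
        rw [hpay]; linarith
  · intro a ha
    funext i
    cases h : a i with
    | risky => rfl
    | safe =>
        exfalso
        have key := ha i Act.risky
        have h2 : payoff p κ v q (Function.update a i Act.risky) i = p * v - (1 - p) * κ := by
          simp [payoff]
        have h1 := hsafe a i h
        rw [h2] at key
        linarith

end RegretGame
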